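/- Let g: 𝒳 → 𝒴 with 𝒳 ⊆ ℝ^N and 𝒴 ⊆ ℝ^M be a Lipschitz function with Lipschitz constant λ, let X be a random variable on 𝒳 and Y = g(X). Then for every n and every quantization cell value x̂_k, the conditional entropy satisfies H(Ŷ_n | X̂_n = x̂_k) ≤ M log⌈λ√N + 1⌉; consequently lim_{n→∞} H(Ŷ_n | X̂_n)/n = 0. -/

import Mathlib

open MeasureTheory ProbabilityTheory Filter Set
open scoped ENNReal NNReal Topology

noncomputable section

/-- Base-2 entropy of the discrete (atomic) part of a measure. -/
def pmfEntropy {β : Type*} [MeasurableSpace β] (ν : Measure β) : ℝ≥0∞ :=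
  ∑' b : β, ENNReal.ofReal (-((ν {b}).toReal * Real.logb 2 (ν {b}).toReal))

/-- Conditional entropy `H(X | Y)` (of a discretely supported `X`) given `Y`,
computed through the regular conditional distribution of `X` given `Y`. -/
def condEnt {α β γ : Type*} [MeasurableSpace α] [MeasurableSpace β] [StandardBorelSpace β]
    [Nonempty β] [MeasurableSpace γ] (μ : Measure α) [IsFiniteMeasure μ]
    (X : α → β) (Y : α → γ) : ℝ≥0∞ :=
  ∫⁻ y, pmfEntropy (condDistrib X Y μ y) ∂(μ.map Y)

/-- Componentwise uniform quantization `X̂ₙ = ⌊2ⁿ X⌋ / 2ⁿ`. -/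
def quant {ι : Type*} (n : ℕ) (x : ι → ℝ) : ι → ℝ :=
  fun i => (⌊(2 : ℝ) ^ n * x i⌋ : ℝ) / (2 : ℝ) ^ n

/-- `H(X̂ₙ)`, entropy of the quantized input. -/
def entQ {α ι : Type*} [MeasurableSpace α] [Fintype ι] (μ : Measure α)
    (X : α → ι → ℝ) (n : ℕ) : ℝ≥0∞ :=
  pmfEntropy (μ.map fun a => quant n (X a))

/-- `H(X̂ₙ | Y)`. -/
def condEntQ {α ι γ : Type*} [MeasurableSpace α] [Fintype ι] [MeasurableSpace γ]
    (μ : Measure α) [IsFiniteMeasure μ] (X : α → ι → ℝ) (Y : α → γ) (n : ℕ) : ℝ≥0∞ :=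
  condEnt μ (fun a => quant n (X a)) Y

/-- Information loss `L(X→Y) = H(X|Y) = limₙ H(X̂ₙ|Y)`; since the sequence
`H(X̂ₙ|Y)` is nondecreasing in `n` the limit equals the supremum. -/
def infoLoss {α ι γ : Type*} [MeasurableSpace α] [Fintype ι] [MeasurableSpace γ]
    (μ : Measure α) [IsFiniteMeasure μ] (X : α → ι → ℝ) (Y : α → γ) : ℝ≥0∞ :=
  ⨆ n : ℕ, condEntQ μ X Y n

/-- The sequence `H(X̂ₙ|Y)/H(X̂ₙ)` whose limit is the relative information loss. -/
def relLossSeq {α ι γ : Type*} [MeasurableSpace α] [Fintype ι] [MeasurableSpace γ]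
    (μ : Measure α) [IsFiniteMeasure μ] (X : α → ι → ℝ) (Y : α → γ) (n : ℕ) : ℝ :=
  (condEntQ μ X Y n).toReal / (entQ μ X n).toReal

/-- The sequence `I(X̂ₙ;Y)/H(X̂ₙ) = (H(X̂ₙ) - H(X̂ₙ|Y))/H(X̂ₙ)` whose limit is the
relative information transfer. -/
def relTransSeq {α ι γ : Type*} [MeasurableSpace α] [Fintype ι] [MeasurableSpace γ]
    (μ : Measure α) [IsFiniteMeasure μ] (X : α → ι → ℝ) (Y : α → γ) (n : ℕ) : ℝ :=
  ((entQ μ X n).toReal - (condEntQ μ X Y n).toReal) / (entQ μ X n).toReal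

/-- `H(ν̂ₙ)` for a measure on `ℝᴺ` (quantized entropy of a distribution). -/
def entQM {ι : Type*} [Fintype ι] (ν : Measure (ι → ℝ)) (n : ℕ) : ℝ≥0∞ :=
  pmfEntropy (ν.map (quant n))


lemma pmfEntropy_le_logb_card {β : Type*} [MeasurableSpace β] [MeasurableSingletonClass β]
    (ν : Measure β) [IsProbabilityMeasure ν] (S : Finset β) (hS : ν S = 1) :
    pmfEntropy ν ≤ ENNReal.ofReal (Real.logb 2 S.card) := by
  set p : β → ℝ := fun b => (ν {b}).toReal with hp
  have hp0 : ∀ b, 0 ≤ p b := fun b => ENNReal.toReal_nonneg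
  have hp1 : ∀ b, p b ≤ 1 := by
    intro b
    have := prob_le_one (μ := ν) (s := {b})
    exact ENNReal.toReal_le_of_le_ofReal zero_le_one (by simpa using this)
  have hSc : ν (↑S : Set β)ᶜ = 0 := by
    have := measure_compl (μ := ν) S.measurableSet (measure_ne_top ν _)
    rw [hS, measure_univ] at this
    simp [this]
  have hout : ∀ b ∉ S, ν {b} = 0 := by
    intro b hb
    have : ν {b} ≤ ν (↑S : Set β)ᶜ := measure_mono (by simpa using hb)
    simpa [hSc] using le_antisymm (this.trans_eq hSc) zero_le
  have hsum : ∑ b ∈ S, ν {b} = 1 := by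
    rw [← hS]
    rw [← measure_biUnion_finset (f := fun b => ({b} : Set β))
      (fun b _ c _ hbc => by simp [Set.disjoint_singleton, hbc])
      (fun b _ => measurableSet_singleton b)]
    congr 1
    ext x; simp
  have hsumR : ∑ b ∈ S, p b = 1 := by
    have : ((∑ b ∈ S, ν {b}).toReal) = 1 := by rw [hsum]; simp
    rwa [ENNReal.toReal_sum (fun b _ => measure_ne_top ν _)] at this
  have hterm : ∀ b, 0 ≤ -(p b * Real.logb 2 (p b)) := by
    intro b
    have : Real.logb 2 (p b) ≤ 0 := Real.logb_nonpos one_lt_two (hp0 b) (hp1 b)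
    nlinarith [hp0 b]
  -- reduce tsum to finite sum
  have htsum : pmfEntropy ν = ENNReal.ofReal (∑ b ∈ S, -(p b * Real.logb 2 (p b))) := by
    rw [pmfEntropy, tsum_eq_sum (s := S) (by
      intro b hb
      rw [show ν {b} = 0 from hout b hb]
      simp)]
    rw [ENNReal.ofReal_sum_of_nonneg (fun b _ => hterm b)]
  rw [htsum]
  apply ENNReal.ofReal_le_ofReal
  -- the real inequality
  set T : Finset β := S.filter (fun b => 0 < p b) with hT
  have hTs : ∑ b ∈ T, -(p b * Real.logb 2 (p b)) = ∑ b ∈ S, -(p b * Real.logb 2 (p b)) := by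
    apply Finset.sum_subset (Finset.filter_subset _ _)
    intro b hb hnb
    have : p b = 0 := by
      rcases (hp0 b).lt_or_eq with h | h
      · exact absurd (Finset.mem_filter.2 ⟨hb, h⟩) hnb
      · exact h.symm
    simp [this]
  have hTsum : ∑ b ∈ T, p b = 1 := by
    rw [← hsumR]
    apply Finset.sum_subset (Finset.filter_subset _ _)
    intro b hb hnb
    rcases (hp0 b).lt_or_eq with h | h
    · exact absurd (Finset.mem_filter.2 ⟨hb, h⟩) hnb
    · exact h.symm
  have hTpos : ∀ b ∈ T, 0 < p b := fun b hb => (Finset.mem_filter.1 hb).2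
  have hTne : T.Nonempty := by
    by_contra h
    rw [Finset.not_nonempty_iff_eq_empty] at h
    rw [h] at hTsum; simp at hTsum
  -- Jensen for log
  have hjensen : ∑ b ∈ T, p b * Real.log (p b)⁻¹ ≤ Real.log T.card := by
    have hcon : ConcaveOn ℝ (Set.Ioi 0) Real.log := StrictConcaveOn.concaveOn strictConcaveOn_log_Ioi
    have := hcon.le_map_sum (t := T) (w := p) (p := fun b => (p b)⁻¹)
      (fun b hb => (hTpos b hb).le) hTsum
      (fun b hb => Set.mem_Ioi.2 (inv_pos.2 (hTpos b hb)))
    simp only [smul_eq_mul] at this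
    have heq : ∑ b ∈ T, p b * (p b)⁻¹ = T.card := by
      rw [Finset.sum_congr rfl (fun b hb => mul_inv_cancel₀ (hTpos b hb).ne')]
      simp
    rwa [heq] at this
  have hlog2 : (0:ℝ) < Real.log 2 := Real.log_pos one_lt_two
  rw [← hTs]
  have hstep : ∑ b ∈ T, -(p b * Real.logb 2 (p b)) ≤ Real.logb 2 T.card := by
    have : ∑ b ∈ T, -(p b * Real.logb 2 (p b))
        = (∑ b ∈ T, p b * Real.log (p b)⁻¹) / Real.log 2 := by
      rw [Finset.sum_div]
      apply Finset.sum_congr rfl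
      intro b hb
      rw [Real.log_inv, Real.logb]
      ring
    rw [this, Real.logb]
    gcongr
  refine hstep.trans ?_
  have hcard : (T.card : ℝ) ≤ S.card := by
    exact_mod_cast Finset.card_le_card (Finset.filter_subset _ _)
  have hTcpos : (0:ℝ) < T.card := by exact_mod_cast Finset.card_pos.2 hTne
  exact Real.logb_le_logb_of_le one_lt_two hTcpos hcard

lemma condDistrib_eq_cond_map {α β Ω : Type*} [MeasurableSpace α] [MeasurableSpace β]
    [MeasurableSingletonClass β] [MeasurableSpace Ω] [StandardBorelSpace Ω] [Nonempty Ω]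
    {μ : Measure α} [IsFiniteMeasure μ] {X : α → β} {Y : α → Ω}
    (hX : Measurable X) (hY : Measurable Y) (x : β) (hx : μ.map X {x} ≠ 0) :
    condDistrib Y X μ x = (μ[|X ⁻¹' {x}]).map Y := by
  ext s hs
  rw [condDistrib_apply_of_ne_zero hY x hx s,
    Measure.map_apply hY hs, cond_apply (hX (measurableSet_singleton x)) μ,
    Measure.map_apply hX (measurableSet_singleton x),
    Measure.map_apply (hX.prodMk hY) ((measurableSet_singleton x).prod hs)]
  congr 1

lemma measurable_quant {ι : Type*} [Fintype ι] (n : ℕ) : Measurable (quant (ι := ι) n) := by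
  apply measurable_pi_lambda
  intro i
  exact ((measurable_from_top (f := fun k : ℤ => (k:ℝ))).comp
    ((measurable_const.mul (measurable_pi_apply i)).floor)).div_const _

lemma aux_part1 {α ι κ : Type*} [MeasurableSpace α] [Fintype ι] [Fintype κ]
    (μ : Measure α) [IsProbabilityMeasure μ]
    (X : α → ι → ℝ) (g : (ι → ℝ) → κ → ℝ) (s : Set (ι → ℝ))
    (hX : Measurable X) (hg : Measurable g) (hXs : ∀ a, X a ∈ s)
    (lam : ℝ) (hlam : 0 ≤ lam)
    (hLip : ∀ x ∈ s, ∀ y ∈ s,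
      Real.sqrt (∑ j, (g x j - g y j) ^ 2) ≤ lam * Real.sqrt (∑ i, (x i - y i) ^ 2))
    (n : ℕ) (xh : ι → ℝ) :
    pmfEntropy ((μ[|(fun a => quant n (X a)) ⁻¹' {xh}]).map
        (fun a => quant n (g (X a)))) ≤
      ENNReal.ofReal ((Fintype.card κ : ℝ) *
        Real.logb 2 (⌈lam * Real.sqrt (Fintype.card ι) + 1⌉₊ : ℝ)) := by
  classical
  set E : Set α := (fun a => quant n (X a)) ⁻¹' {xh} with hE
  set L : ℝ := lam * Real.sqrt (Fintype.card ι) with hLdef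
  set K : ℕ := ⌈L + 1⌉₊ with hKdef
  have hL0 : 0 ≤ L := mul_nonneg hlam (Real.sqrt_nonneg _)
  have hK1 : 1 ≤ K := Nat.one_le_iff_ne_zero.2 (by
    intro h
    have := Nat.ceil_eq_zero.1 h
    linarith)
  have hKL : L + 1 ≤ (K : ℝ) := Nat.le_ceil _
  by_cases h0 : μ E = 0
  · have : μ[|E] = 0 := by
      simp [ProbabilityTheory.cond, Measure.restrict_eq_zero.mpr h0]
    rw [this]
    simp [pmfEntropy]
  -- E is nonempty
  obtain ⟨a₀, ha₀⟩ : E.Nonempty := nonempty_of_measure_ne_zero h0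
  have hp2 : (0:ℝ) < 2 ^ n := by positivity
  -- floor comparison lemma
  have hfloor : ∀ t t' : ℝ, |t - t'| ≤ L → ⌊t⌋ ≤ ⌊t'⌋ + ((K : ℤ) - 1) := by
    intro t t' h
    have h1 : (⌊t⌋ : ℝ) ≤ t := Int.floor_le t
    have h2 : t' < ⌊t'⌋ + 1 := Int.lt_floor_add_one t'
    have h3 : t - t' ≤ L := (abs_le.1 h).2
    have : (⌊t⌋ : ℝ) < (⌊t'⌋ : ℝ) + (K : ℝ) := by linarith
    have : (⌊t⌋ : ℤ) < ⌊t'⌋ + (K : ℤ) := by exact_mod_cast this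
    omega
  -- pairwise bound on scaled g values within the cell
  have hpair : ∀ a ∈ E, ∀ a' ∈ E, ∀ j,
      |2 ^ n * g (X a) j - 2 ^ n * g (X a') j| ≤ L := by
    intro a ha a' ha' j
    have hq : quant n (X a) = quant n (X a') := by
      have h1 : quant n (X a) = xh := ha
      have h2 : quant n (X a') = xh := ha'
      rw [h1, h2]
    have hfl : ∀ i, ⌊(2:ℝ)^n * X a i⌋ = ⌊(2:ℝ)^n * X a' i⌋ := by
      intro i
      have := congrFun hq i
      simp only [quant] at this
      have h2 : ((⌊(2:ℝ)^n * X a i⌋ : ℝ)) = ((⌊(2:ℝ)^n * X a' i⌋ : ℝ)) := by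
        field_simp at this
        exact_mod_cast this
      exact_mod_cast h2
    have hcoord : ∀ i, |X a i - X a' i| ≤ 1 / 2 ^ n := by
      intro i
      have h1 : (⌊(2:ℝ)^n * X a i⌋ : ℝ) ≤ 2^n * X a i := Int.floor_le _
      have h2 : 2^n * X a i < ⌊(2:ℝ)^n * X a i⌋ + 1 := Int.lt_floor_add_one _
      have h3 : (⌊(2:ℝ)^n * X a' i⌋ : ℝ) ≤ 2^n * X a' i := Int.floor_le _
      have h4 : 2^n * X a' i < ⌊(2:ℝ)^n * X a' i⌋ + 1 := Int.lt_floor_add_one _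
      have h5 : ((⌊(2:ℝ)^n * X a i⌋ : ℝ)) = ((⌊(2:ℝ)^n * X a' i⌋ : ℝ)) :=
        congrArg (fun z : ℤ => (z : ℝ)) (hfl i)
      have h8 : (2:ℝ)^n * (1/2^n) = 1 := by field_simp
      rw [abs_le]
      constructor
      · nlinarith
      · nlinarith
    have hsq : Real.sqrt (∑ i, (X a i - X a' i) ^ 2)
        ≤ Real.sqrt (Fintype.card ι) * (1 / 2 ^ n) := by
      have hsum : ∑ i, (X a i - X a' i) ^ 2 ≤ (Fintype.card ι : ℝ) * (1 / 2 ^ n) ^ 2 := by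
        calc ∑ i, (X a i - X a' i) ^ 2 ≤ ∑ _i : ι, ((1:ℝ) / 2 ^ n) ^ 2 :=
              Finset.sum_le_sum (fun i _ => by
                have h := hcoord i
                have h2 := abs_nonneg (X a i - X a' i)
                nlinarith [sq_abs (X a i - X a' i)])
          _ = (Fintype.card ι : ℝ) * (1 / 2 ^ n) ^ 2 := by
              rw [Finset.sum_const, Finset.card_univ, nsmul_eq_mul]
      calc Real.sqrt (∑ i, (X a i - X a' i) ^ 2)
          ≤ Real.sqrt ((Fintype.card ι : ℝ) * (1 / 2 ^ n) ^ 2) := Real.sqrt_le_sqrt hsum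
        _ = Real.sqrt (Fintype.card ι) * (1 / 2 ^ n) := by
            rw [Real.sqrt_mul (by positivity), Real.sqrt_sq (by positivity)]
    have hgl : Real.sqrt (∑ j', (g (X a) j' - g (X a') j') ^ 2)
        ≤ lam * (Real.sqrt (Fintype.card ι) * (1 / 2 ^ n)) :=
      (hLip _ (hXs a) _ (hXs a')).trans (by
        exact mul_le_mul_of_nonneg_left hsq hlam)
    have hcomp : |g (X a) j - g (X a') j|
        ≤ lam * (Real.sqrt (Fintype.card ι) * (1 / 2 ^ n)) := by
      have h1 : (g (X a) j - g (X a') j) ^ 2 ≤ ∑ j', (g (X a) j' - g (X a') j') ^ 2 :=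
        Finset.single_le_sum (f := fun j' => (g (X a) j' - g (X a') j') ^ 2)
          (fun _ _ => sq_nonneg _) (Finset.mem_univ j)
      have h2 : |g (X a) j - g (X a') j| = Real.sqrt ((g (X a) j - g (X a') j) ^ 2) :=
        (Real.sqrt_sq_eq_abs _).symm
      rw [h2]
      exact (Real.sqrt_le_sqrt h1).trans hgl
    have : |2 ^ n * g (X a) j - 2 ^ n * g (X a') j|
        = 2 ^ n * |g (X a) j - g (X a') j| := by
      rw [← mul_sub, abs_mul, abs_of_pos hp2]
    rw [this, hLdef]
    calc (2:ℝ) ^ n * |g (X a) j - g (X a') j|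
        ≤ 2 ^ n * (lam * (Real.sqrt (Fintype.card ι) * (1 / 2 ^ n))) :=
          mul_le_mul_of_nonneg_left hcomp hp2.le
      _ = lam * Real.sqrt (Fintype.card ι) := by field_simp
  -- attained floor sets
  set A : κ → Set ℤ := fun j => {k | ∃ a ∈ E, ⌊(2:ℝ)^n * g (X a) j⌋ = k} with hA
  have hAne : ∀ j, (A j).Nonempty := fun j => ⟨_, a₀, ha₀, rfl⟩
  have hAbdd : ∀ j, BddBelow (A j) := by
    intro j
    refine ⟨⌊(2:ℝ)^n * g (X a₀) j⌋ - ((K:ℤ) - 1), ?_⟩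
    rintro k ⟨a, ha, rfl⟩
    have := hfloor _ _ (hpair a₀ ha₀ a ha j)
    omega
  set m : κ → ℤ := fun j => sInf (A j) with hm
  have hmmem : ∀ j, m j ∈ A j := fun j => Int.csInf_mem (hAne j) (hAbdd j)
  have hbound : ∀ j, ∀ k ∈ A j, k ∈ Finset.Icc (m j) (m j + ((K:ℤ) - 1)) := by
    intro j k hk
    rw [Finset.mem_Icc]
    refine ⟨csInf_le (hAbdd j) hk, ?_⟩
    obtain ⟨a', ha', hk'⟩ := hmmem j
    obtain ⟨a, ha, rfl⟩ := hk
    have := hfloor _ _ (hpair a ha a' ha' j)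
    omega
  set S : Finset (κ → ℝ) :=
    Fintype.piFinset fun j => (Finset.Icc (m j) (m j + ((K:ℤ) - 1))).image
      (fun k : ℤ => (k : ℝ) / 2 ^ n) with hS
  have hmemS : ∀ a ∈ E, quant n (g (X a)) ∈ S := by
    intro a ha
    rw [hS, Fintype.mem_piFinset]
    intro j
    rw [Finset.mem_image]
    exact ⟨⌊(2:ℝ)^n * g (X a) j⌋, hbound j _ ⟨a, ha, rfl⟩, rfl⟩
  -- the conditional measure is a probability measure
  have hEmeas : MeasurableSet E := ((measurable_quant n).comp hX) (measurableSet_singleton xh)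
  haveI : IsProbabilityMeasure (μ[|E]) := cond_isProbabilityMeasure h0
  have hmeasq : Measurable fun a => quant n (g (X a)) :=
    (measurable_quant n).comp (hg.comp hX)
  set ν : Measure (κ → ℝ) := (μ[|E]).map (fun a => quant n (g (X a))) with hν
  haveI : IsProbabilityMeasure ν := Measure.isProbabilityMeasure_map hmeasq.aemeasurable
  have hνS : ν S = 1 := by
    rw [hν, Measure.map_apply hmeasq S.measurableSet]
    refine le_antisymm prob_le_one ?_
    have hEE : μ[|E] E = 1 := by
      rw [cond_apply hEmeas, Set.inter_self, ENNReal.inv_mul_cancel h0 (measure_ne_top μ E)]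
    calc (1:ℝ≥0∞) = μ[|E] E := hEE.symm
      _ ≤ μ[|E] ((fun a => quant n (g (X a))) ⁻¹' ↑S) := measure_mono (fun a ha => hmemS a ha)
  refine (pmfEntropy_le_logb_card ν S hνS).trans (ENNReal.ofReal_le_ofReal ?_)
  -- cardinality bound
  have hcard : S.card ≤ K ^ (Fintype.card κ) := by
    rw [hS, Fintype.card_piFinset]
    calc ∏ j, ((Finset.Icc (m j) (m j + ((K:ℤ) - 1))).image
          (fun k : ℤ => (k : ℝ) / 2 ^ n)).card
        ≤ ∏ _j : κ, K := by
          apply Finset.prod_le_prod (fun _ _ => Nat.zero_le _)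
          intro j _
          calc ((Finset.Icc (m j) (m j + ((K:ℤ) - 1))).image
                (fun k : ℤ => (k : ℝ) / 2 ^ n)).card
              ≤ (Finset.Icc (m j) (m j + ((K:ℤ) - 1))).card := Finset.card_image_le
            _ = K := by rw [Int.card_Icc]; omega
      _ = K ^ (Fintype.card κ) := by rw [Finset.prod_const, Finset.card_univ]
  rcases Nat.eq_zero_or_pos S.card with hc | hc
  · rw [hc]
    simp only [Nat.cast_zero, Real.logb_zero]
    have : (0:ℝ) ≤ Real.logb 2 K :=
      Real.logb_nonneg one_lt_two (by exact_mod_cast hK1)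
    positivity
  · have h1 : Real.logb 2 S.card ≤ Real.logb 2 ((K:ℝ) ^ (Fintype.card κ)) := by
      apply Real.logb_le_logb_of_le one_lt_two (by exact_mod_cast hc)
      exact_mod_cast hcard
    rw [Real.logb_pow] at h1
    exact h1


/-- **Lipschitz functions: conditional output entropy of quantizations.**
If `g : 𝒳 → 𝒴` (`𝒳 ⊆ ℝᴺ`, `𝒴 ⊆ ℝᴹ`) is Lipschitz with constant `λ` (w.r.t. the
Euclidean metrics) and `Y = g(X)`, then for every `n` and every quantization cell
value `x̂` one has `H(Ŷₙ | X̂ₙ = x̂) ≤ M · log₂⌈λ√N + 1⌉`, and consequently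
`limₙ H(Ŷₙ|X̂ₙ)/n = 0`. -/
theorem condEnt_quant_le_of_lipschitz
    {α ι κ : Type*} [MeasurableSpace α] [Fintype ι] [Fintype κ]
    (μ : Measure α) [IsProbabilityMeasure μ]
    (X : α → ι → ℝ) (g : (ι → ℝ) → κ → ℝ) (s : Set (ι → ℝ))
    (hX : Measurable X) (hg : Measurable g) (hXs : ∀ a, X a ∈ s)
    (lam : ℝ) (hlam : 0 ≤ lam)
    (hLip : ∀ x ∈ s, ∀ y ∈ s,
      Real.sqrt (∑ j, (g x j - g y j) ^ 2) ≤ lam * Real.sqrt (∑ i, (x i - y i) ^ 2)) :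
    (∀ n : ℕ, ∀ xh : ι → ℝ,
      pmfEntropy ((μ[|(fun a => quant n (X a)) ⁻¹' {xh}]).map
          (fun a => quant n (g (X a)))) ≤
        ENNReal.ofReal ((Fintype.card κ : ℝ) *
          Real.logb 2 (⌈lam * Real.sqrt (Fintype.card ι) + 1⌉₊ : ℝ))) ∧
    Tendsto (fun n : ℕ =>
        condEnt μ (fun a => quant n (g (X a))) (fun a => quant n (X a)) / (n : ℝ≥0∞))
      atTop (𝓝 0) := by
  constructor
  · intro n xh
    exact aux_part1 μ X g s hX hg hXs lam hlam hLip n xh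
  · set C : ℝ≥0∞ := ENNReal.ofReal ((Fintype.card κ : ℝ) *
        Real.logb 2 (⌈lam * Real.sqrt (Fintype.card ι) + 1⌉₊ : ℝ)) with hC
    have hbound : ∀ n : ℕ,
        condEnt μ (fun a => quant n (g (X a))) (fun a => quant n (X a)) ≤ C := by
      intro n
      set X' : α → ι → ℝ := fun a => quant n (X a) with hX'def
      set Y' : α → κ → ℝ := fun a => quant n (g (X a)) with hY'def
      have hX' : Measurable X' := (measurable_quant n).comp hX
      have hY' : Measurable Y' := (measurable_quant n).comp (hg.comp hX)
      have hD : (Set.range (quant (ι := ι) n)).Countable := by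
        have : Set.range (quant (ι := ι) n) ⊆
            Set.range (fun v : ι → ℤ => fun i => (v i : ℝ) / 2 ^ n) := by
          rintro y ⟨x, rfl⟩
          exact ⟨fun i => ⌊(2:ℝ)^n * x i⌋, rfl⟩
        exact (Set.countable_range _).mono this
      have hae : ∀ᵐ y ∂(μ.map X'), pmfEntropy (condDistrib Y' X' μ y) ≤ C := by
        rw [ae_iff]
        refine measure_mono_null (t := (Set.range (quant (ι := ι) n))ᶜ ∪
          ({y | (μ.map X') {y} = 0} ∩ Set.range (quant (ι := ι) n))) ?_ ?_
        · intro y hy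
          simp only [Set.mem_setOf_eq] at hy
          by_cases hyD : y ∈ Set.range (quant (ι := ι) n)
          · refine Or.inr ⟨?_, hyD⟩
            by_contra hne
            apply hy
            rw [condDistrib_eq_cond_map hX' hY' y hne]
            exact aux_part1 μ X g s hX hg hXs lam hlam hLip n y
          · exact Or.inl hyD
        · apply measure_union_null
          · rw [Measure.map_apply hX' hD.measurableSet.compl]
            have : X' ⁻¹' (Set.range (quant (ι := ι) n))ᶜ = ∅ := by
              ext a
              simp [hX'def, Set.mem_range]
            simp [this]
          · have hJc : ({y | (μ.map X') {y} = 0} ∩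
                Set.range (quant (ι := ι) n)).Countable :=
              hD.mono Set.inter_subset_right
            rw [← Set.biUnion_of_singleton ({y | (μ.map X') {y} = 0} ∩
              Set.range (quant (ι := ι) n)), measure_biUnion_null_iff hJc]
            intro y hy
            exact hy.1
      haveI : IsProbabilityMeasure (μ.map X') := Measure.isProbabilityMeasure_map hX'.aemeasurable
      calc condEnt μ Y' X' = ∫⁻ y, pmfEntropy (condDistrib Y' X' μ y) ∂(μ.map X') := rfl
        _ ≤ ∫⁻ _, C ∂(μ.map X') := lintegral_mono_ae hae
        _ = C := by simp
    have hCd : Tendsto (fun n : ℕ => C / (n : ℝ≥0∞)) atTop (𝓝 0) := by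
      have h1 : Tendsto (fun n : ℕ => C * ((n : ℝ≥0∞))⁻¹) atTop (𝓝 (C * 0)) :=
        ENNReal.Tendsto.const_mul ENNReal.tendsto_inv_nat_nhds_zero
          (Or.inr ENNReal.ofReal_ne_top)
      simpa [ENNReal.div_eq_inv_mul, mul_comm] using h1
    refine tendsto_of_tendsto_of_tendsto_of_le_of_le tendsto_const_nhds hCd
      (fun n => zero_le) (fun n => ?_)
    exact ENNReal.div_le_div_right (hbound n) _
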